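/- If A is an n × n real positive semidefinite matrix with all diagonal entries equal to 1 (a correlation matrix), then A^{1/2} ∘ A^{1/2} is doubly stochastic, i.e., it has nonnegative entries and all its row sums and column sums equal 1. -/

import Mathlib

open Matrix

open scoped ComplexOrder

/-- The positive semidefinite square root of a positive semidefinite matrix, as defined in
Mathlib (December 2024), since removed from Mathlib. -/
noncomputable def Matrix.PosSemidef.sqrt {n 𝕜 : Type*} [Fintype n] [RCLike 𝕜] [DecidableEq n]
    {A : Matrix n n 𝕜} (hA : A.PosSemidef) : Matrix n n 𝕜 :=
  hA.1.eigenvectorUnitary.1 * diagonal (fun i => ((hA.1.eigenvalues i).sqrt : 𝕜)) *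
  (star hA.1.eigenvectorUnitary : Matrix n n 𝕜)

lemma posSemidef_sqrt_mul_self_aux {n : ℕ} (A : Matrix (Fin n) (Fin n) ℝ)
    (hA : A.PosSemidef) : hA.sqrt * hA.sqrt = A := by
  have hU : (star hA.1.eigenvectorUnitary : Matrix (Fin n) (Fin n) ℝ) * hA.1.eigenvectorUnitary.1 = 1 :=
    Unitary.coe_star_mul_self _
  conv_rhs => rw [hA.1.spectral_theorem]
  simp only [Matrix.PosSemidef.sqrt, Unitary.conjStarAlgAut_apply]
  rw [show ∀ a b c d e f : Matrix (Fin n) (Fin n) ℝ, a * b * c * (d * e * f) = a * b * (c * d) * e * f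
    from fun a b c d e f => by simp only [Matrix.mul_assoc], hU, Matrix.mul_one, Matrix.mul_assoc _ (diagonal _) (diagonal _),
    diagonal_mul_diagonal]
  congr 2
  ext i j
  by_cases h : i = j <;> simp [h, Real.mul_self_sqrt (hA.eigenvalues_nonneg j)]

theorem sqrt_hadamard_sqrt_doublyStochastic {n : ℕ} (A : Matrix (Fin n) (Fin n) ℝ)
    (hA : A.PosSemidef) (hdiag : ∀ i, A i i = 1) :
    (∀ i j, 0 ≤ Matrix.hadamard hA.sqrt hA.sqrt i j) ∧
    (∀ i, ∑ j, Matrix.hadamard hA.sqrt hA.sqrt i j = 1) ∧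
    (∀ j, ∑ i, Matrix.hadamard hA.sqrt hA.sqrt i j = 1) := by
  have hsym : ∀ i j, hA.sqrt i j = hA.sqrt j i := by
    intro i j
    have hH : (hA.sqrt)ᴴ = hA.sqrt := by
      simp only [Matrix.PosSemidef.sqrt, conjTranspose_mul, diagonal_conjTranspose, Matrix.mul_assoc]
      simp [Matrix.star_eq_conjTranspose]
    have := congrFun (congrFun hH j) i
    simpa using this
  have hmul : ∀ i, ∑ j, hA.sqrt i j * hA.sqrt j i = 1 := by
    intro i
    have : (hA.sqrt * hA.sqrt) i i = A i i := by rw [posSemidef_sqrt_mul_self_aux A hA]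
    rw [Matrix.mul_apply] at this
    rw [this, hdiag]
  refine ⟨fun i j => ?_, fun i => ?_, fun j => ?_⟩
  · simp only [Matrix.hadamard_apply]
    rw [hsym i j]
    exact mul_self_nonneg _
  · calc ∑ j, Matrix.hadamard hA.sqrt hA.sqrt i j
        = ∑ j, hA.sqrt i j * hA.sqrt j i := by
          simp only [Matrix.hadamard_apply]
          exact Finset.sum_congr rfl fun j _ => by rw [hsym i j]
      _ = 1 := hmul i
  · calc ∑ i, Matrix.hadamard hA.sqrt hA.sqrt i j
        = ∑ i, hA.sqrt j i * hA.sqrt i j := by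
          simp only [Matrix.hadamard_apply]
          exact Finset.sum_congr rfl fun i _ => by rw [hsym i j]
      _ = 1 := hmul j
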